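/- arXiv:2506.12218 — 9 statements merged into one kernel-verified Lean document; each statement's English description precedes it below -/
import Mathlib

section
/- (Proposition 1) Let N ≥ 1 and let A be an N×N real strictly lower triangular matrix with nonnegative entries, W = (I − A)⁻¹, and for each node k let S_k = W · D_k · W⁻¹ be the causal graph-shift operator. Then for every node k the support of S_k is contained in the support of W: for all indices i, j, if (S_k) i j ≠ 0 then W i j ≠ 0. -/
open Matrix BigOperators

/-- Proposition 1: For a strictly lower triangular real matrix `A`
with nonnegative entries, `W = (I - A)⁻¹`, and causal graph-shift operators
`S k = W * D k * W⁻¹`, the support of each `S k` is contained in the support of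
`W`: if `(S k) i j ≠ 0` then `W i j ≠ 0`. -/
theorem causal_gso_support_subset {N : ℕ} (hN : 1 ≤ N)
    (A : Matrix (Fin N) (Fin N) ℝ)
    (hA : ∀ i j : Fin N, i ≤ j → A i j = 0)
    (hApos : ∀ i j : Fin N, 0 ≤ A i j)
    (W : Matrix (Fin N) (Fin N) ℝ) (hW : W = (1 - A)⁻¹)
    (D : Fin N → Matrix (Fin N) (Fin N) ℝ)
    (hD : ∀ k, D k = Matrix.diagonal (fun i => if W k i ≠ 0 then (1 : ℝ) else 0))
    (S : Fin N → Matrix (Fin N) (Fin N) ℝ)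
    (hS : ∀ k, S k = W * D k * W⁻¹) :
    ∀ k i j : Fin N, S k i j ≠ 0 → W i j ≠ 0 := by
  -- determinant of 1 - A is 1
  have hdet : (1 - A).det = 1 := by
    rw [Matrix.det_of_lowerTriangular (1 - A) (fun i j hij => by
      have h : i < j := hij
      simp [Matrix.sub_apply, Matrix.one_apply, h.ne, hA i j h.le])]
    simp [Matrix.sub_apply, Matrix.one_apply, fun i => hA i i le_rfl]
  have hunit : IsUnit (1 - A).det := by rw [hdet]; exact isUnit_one
  have hWinv : W⁻¹ = 1 - A := by rw [hW, Matrix.nonsing_inv_nonsing_inv _ hunit]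
  have hleft : (1 - A) * W = 1 := by rw [hW, Matrix.mul_nonsing_inv _ hunit]
  have hright : W * (1 - A) = 1 := by rw [hW, Matrix.nonsing_inv_mul _ hunit]
  have hWeq : W = 1 + A * W := by
    have h : W - A * W = 1 := by
      calc W - A * W = (1 - A) * W := by rw [Matrix.sub_mul, Matrix.one_mul]
      _ = 1 := hleft
    rw [sub_eq_iff_eq_add] at h
    exact h
  have hWeq' : W = 1 + W * A := by
    have h : W - W * A = 1 := by
      calc W - W * A = W * (1 - A) := by rw [Matrix.mul_sub, Matrix.mul_one]
      _ = 1 := hright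
    rw [sub_eq_iff_eq_add] at h
    exact h
  -- entrywise recursion
  have hrec : ∀ i j : Fin N, W i j
      = (if i = j then (1:ℝ) else 0) + ∑ m, A i m * W m j := by
    intro i j
    conv_lhs => rw [hWeq]
    simp [Matrix.add_apply, Matrix.mul_apply, Matrix.one_apply]
  have hrec' : ∀ i j : Fin N, W i j
      = (if i = j then (1:ℝ) else 0) + ∑ m, W i m * A m j := by
    intro i j
    conv_lhs => rw [hWeq']
    simp [Matrix.add_apply, Matrix.mul_apply, Matrix.one_apply]
  -- W has nonnegative entries
  have hWnn : ∀ i j : Fin N, 0 ≤ W i j := by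
    have key : ∀ n : ℕ, ∀ i : Fin N, i.val = n → ∀ j, 0 ≤ W i j := by
      intro n
      induction n using Nat.strong_induction_on with
      | _ n ih =>
        intro i hi j
        rw [hrec]
        refine add_nonneg (by split <;> norm_num) (Finset.sum_nonneg fun m _ => ?_)
        by_cases hm : m < i
        · have : (m : ℕ) < n := hi ▸ hm
          exact mul_nonneg (hApos i m) (ih m this m rfl j)
        · rw [hA i m (not_lt.mp hm)]; simp
    exact fun i j => key i.val i rfl j
  intro k i j hSk
  rw [hS, Matrix.mul_apply, hWinv] at hSk
  obtain ⟨m, _, hm⟩ := Finset.exists_ne_zero_of_sum_ne_zero hSk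
  have hm1 : W i m * (Matrix.diagonal (fun i => if W k i ≠ 0 then (1:ℝ) else 0)) m m
      * (1 - A) m j ≠ 0 := by
    rw [hD, Matrix.mul_apply] at hm
    simpa [Matrix.diagonal_apply, Finset.sum_ite_eq] using hm
  by_cases hmj : m = j
  · subst hmj
    have : (1 - A) m m = 1 := by
      simp [Matrix.sub_apply, Matrix.one_apply, hA m m le_rfl]
    rw [this, mul_one] at hm1
    exact fun h => hm1 (by rw [h]; ring)
  · have hA0 : A m j ≠ 0 := by
      intro h
      apply hm1
      simp [Matrix.sub_apply, Matrix.one_apply, hmj, h]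
    have hWim : W i m ≠ 0 := by
      intro h; apply hm1; rw [h]; ring
    have hpos : 0 < W i m * A m j :=
      mul_pos (lt_of_le_of_ne (hWnn i m) (Ne.symm hWim))
        (lt_of_le_of_ne (hApos m j) (Ne.symm hA0))
    have hsum : W i m * A m j ≤ ∑ m', W i m' * A m' j :=
      Finset.single_le_sum (fun m' _ => mul_nonneg (hWnn i m') (hApos m' j))
        (Finset.mem_univ m)
    have : 0 < W i j := by
      rw [hrec' i j]
      have : (0:ℝ) ≤ if i = j then (1:ℝ) else 0 := by split <;> norm_num
      linarith
    exact ne_of_gt this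
end

section
/- (Proposition 2, uniqueness of causal GSOs) Let N ≥ 1 and let A and A' be two N×N real strictly lower triangular matrices. Build for each of them the weighted transitive closure (W = (I − A)⁻¹, W' = (I − A')⁻¹), the diagonal matrices D_k and D'_k ((D_k) i i = 1 iff W k i ≠ 0, and analogously for D'_k from W'), and the causal graph-shift operators S_k = W · D_k · W⁻¹ and S'_k = W' · D'_k · W'⁻¹. If S_k = S'_k for every node k, then A = A'. In other words, distinct DAGs (with the same node ordering) yield distinct sets of causal GSOs. -/
open Matrix BigOperators

section Aux

variable {N : ℕ}

/-- `1 - A` is lower triangular when `A` is strictly lower triangular. -/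
lemma aux_blockTri (A : Matrix (Fin N) (Fin N) ℝ)
    (hA : ∀ i j : Fin N, i ≤ j → A i j = 0) :
    (1 - A).BlockTriangular OrderDual.toDual := by
  intro i j hij
  have hij' : i < j := hij
  simp [Matrix.sub_apply, Matrix.one_apply, hij'.ne, hA i j hij'.le]

lemma aux_det_one (A : Matrix (Fin N) (Fin N) ℝ)
    (hA : ∀ i j : Fin N, i ≤ j → A i j = 0) : (1 - A).det = 1 := by
  rw [Matrix.det_of_lowerTriangular _ (aux_blockTri A hA)]
  have : ∀ i : Fin N, (1 - A) i i = 1 := fun i => by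
    simp [Matrix.sub_apply, hA i i le_rfl]
  simp [this]

lemma aux_inv_lower (A : Matrix (Fin N) (Fin N) ℝ)
    (hA : ∀ i j : Fin N, i ≤ j → A i j = 0) :
    ∀ i j : Fin N, i < j → (1 - A)⁻¹ i j = 0 := by
  have hdet : IsUnit (1 - A).det := by
    rw [aux_det_one A hA]; exact isUnit_one
  haveI : Invertible (1 - A) := (1 - A).invertibleOfIsUnitDet hdet
  have h := Matrix.blockTriangular_inv_of_blockTriangular (aux_blockTri A hA)
  intro i j hij
  exact h (show OrderDual.toDual j < OrderDual.toDual i from hij)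

end Aux

/-- Proposition 2: If two strictly lower triangular real matrices
`A`, `A'` give rise to the same causal graph-shift operators `S k = S' k` for
every node `k`, then `A = A'`; distinct DAGs yield distinct sets of causal GSOs. -/
theorem causal_gso_uniqueness {N : ℕ} (hN : 1 ≤ N)
    (A A' : Matrix (Fin N) (Fin N) ℝ)
    (hA : ∀ i j : Fin N, i ≤ j → A i j = 0)
    (hA' : ∀ i j : Fin N, i ≤ j → A' i j = 0)
    (W W' : Matrix (Fin N) (Fin N) ℝ)
    (hW : W = (1 - A)⁻¹) (hW' : W' = (1 - A')⁻¹)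
    (D D' : Fin N → Matrix (Fin N) (Fin N) ℝ)
    (hD : ∀ k, D k = Matrix.diagonal (fun i => if W k i ≠ 0 then (1 : ℝ) else 0))
    (hD' : ∀ k, D' k = Matrix.diagonal (fun i => if W' k i ≠ 0 then (1 : ℝ) else 0))
    (S S' : Fin N → Matrix (Fin N) (Fin N) ℝ)
    (hS : ∀ k, S k = W * D k * W⁻¹)
    (hS' : ∀ k, S' k = W' * D' k * W'⁻¹)
    (heq : ∀ k : Fin N, S k = S' k) :
    A = A' := by
  have hdet : IsUnit (1 - A).det := by rw [aux_det_one A hA]; exact isUnit_one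
  have hdet' : IsUnit (1 - A').det := by rw [aux_det_one A' hA']; exact isUnit_one
  -- basic triangularity facts
  have hWlow : ∀ i j : Fin N, i < j → W i j = 0 := by
    rw [hW]; exact aux_inv_lower A hA
  have hW'low : ∀ i j : Fin N, i < j → W' i j = 0 := by
    rw [hW']; exact aux_inv_lower A' hA'
  -- (1 - A) * W = 1 and W * (1 - A) = 1
  have hmul : (1 - A) * W = 1 := by rw [hW]; exact Matrix.mul_nonsing_inv _ hdet
  have hmul2 : W * (1 - A) = 1 := by rw [hW]; exact Matrix.nonsing_inv_mul _ hdet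
  have hmul' : (1 - A') * W' = 1 := by rw [hW']; exact Matrix.mul_nonsing_inv _ hdet'
  have hmul2' : W' * (1 - A') = 1 := by rw [hW']; exact Matrix.nonsing_inv_mul _ hdet'
  have hWinv : W⁻¹ = 1 - A := by rw [hW, Matrix.nonsing_inv_nonsing_inv _ hdet]
  have hW'inv : W'⁻¹ = 1 - A' := by rw [hW', Matrix.nonsing_inv_nonsing_inv _ hdet']
  -- diagonal of W is 1
  have hWdiag : ∀ j : Fin N, W j j = 1 := by
    intro j
    have h1 : ((1 - A) * W) j j = 1 := by rw [hmul]; simp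
    rw [Matrix.mul_apply] at h1
    rw [Finset.sum_eq_single j] at h1
    · have : (1 - A) j j = 1 := by simp [Matrix.sub_apply, hA j j le_rfl]
      rw [this, one_mul] at h1; exact h1
    · intro i _ hij
      rcases lt_or_gt_of_ne hij with h | h
      · rw [hWlow i j h, mul_zero]
      · have : (1 - A) j i = 0 := by
          simp [Matrix.sub_apply, Matrix.one_apply_ne (ne_of_lt h : j ≠ i), hA j i (le_of_lt h)]
        rw [this, zero_mul]
    · intro h; exact absurd (Finset.mem_univ j) h
  -- M := (1 - A') * W ; show M = 1
  set M : Matrix (Fin N) (Fin N) ℝ := (1 - A') * W with hM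
  -- commutation: M * D k = D' k * M
  have hcomm : ∀ k, M * D k = D' k * M := by
    intro k
    have h := heq k
    rw [hS, hS', hWinv, hW'inv] at h
    calc M * D k = (1 - A') * (W * D k * (1 - A)) * W := by
          rw [hM]; simp only [Matrix.mul_assoc, hmul, Matrix.mul_one]
      _ = (1 - A') * (W' * D' k * (1 - A')) * W := by rw [h]
      _ = D' k * M := by
          rw [hM]; simp only [← Matrix.mul_assoc, hmul', Matrix.one_mul]
  -- entrywise: M i j = 0 for i > j
  have hMlow : ∀ i j : Fin N, j < i → M i j = 0 := by
    intro i j hji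
    have h := congrFun (congrFun (hcomm j) i) j
    rw [hD, hD'] at h
    rw [Matrix.mul_diagonal, Matrix.diagonal_mul] at h
    have h1 : W j j ≠ 0 := by rw [hWdiag j]; exact one_ne_zero
    have h2 : W' j i = 0 := hW'low j i hji
    simp only [h1, h2, ne_eq, not_true_eq_false, if_true, if_neg, not_not] at h
    simpa using h
  -- M upper part zero and diagonal 1
  have hMeq : M = 1 := by
    ext i j
    rcases lt_trichotomy i j with h | h | h
    · have : M i j = 0 := by
        rw [hM, Matrix.mul_apply]
        apply Finset.sum_eq_zero
        intro x _
        rcases lt_or_ge x j with hx | hx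
        · rcases lt_or_ge i x with hix | hix
          · have : (1 - A') i x = 0 := by
              simp [Matrix.sub_apply, Matrix.one_apply_ne (ne_of_lt hix), hA' i x hix.le]
            rw [this, zero_mul]
          · rw [hWlow x j (lt_of_le_of_lt hix h), mul_zero]
        · have hix : i < x := lt_of_lt_of_le h hx
          have : (1 - A') i x = 0 := by
            simp [Matrix.sub_apply, Matrix.one_apply_ne (ne_of_lt hix), hA' i x hix.le]
          rw [this, zero_mul]
      rw [this, Matrix.one_apply_ne (ne_of_lt h)]
    · subst h
      have : M i i = 1 := by
        rw [hM, Matrix.mul_apply]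
        rw [Finset.sum_eq_single i]
        · have h1 : (1 - A') i i = 1 := by simp [Matrix.sub_apply, hA' i i le_rfl]
          rw [h1, one_mul, hWdiag]
        · intro x _ hx
          rcases lt_or_gt_of_ne hx with hlt | hgt
          · rw [hWlow x i hlt, mul_zero]
          · have : (1 - A') i x = 0 := by
              simp [Matrix.sub_apply, Matrix.one_apply_ne (ne_of_lt hgt), hA' i x hgt.le]
            rw [this, zero_mul]
        · intro h; exact absurd (Finset.mem_univ i) h
      rw [this, Matrix.one_apply_eq]
    · rw [hMlow i j h, Matrix.one_apply_ne (ne_of_gt h)]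
  -- conclude
  have hWW : (1 - A') * W = 1 := hMeq
  have : 1 - A' = 1 - A := by
    have h1 : 1 - A' = W⁻¹ := (Matrix.inv_eq_left_inv hWW).symm
    rw [h1, hWinv]
  have := sub_right_injective this
  exact this.symm
end

section
/- Let N ≥ 1, let A be an N×N real strictly lower triangular matrix with W = (I − A)⁻¹ and diagonal matrices D_k ((D_k) i i = 1 iff W k i ≠ 0). Let σ be a permutation of Fin N with permutation matrix P, let A' = P · A · Pᵀ, W' = (I − A')⁻¹, and for each q let D'_q be the diagonal matrix with (D'_q) i i = 1 iff W' q i ≠ 0 and 0 otherwise. Then for every node k, D'_{σ(k)} = P · D_k · Pᵀ; i.e., the diagonal matrices encoding the partial order are unchanged by relabeling up to the permutation. -/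
open Matrix BigOperators

private lemma P_eq_toMatrix {N : ℕ} (σ : Equiv.Perm (Fin N))
    (P : Matrix (Fin N) (Fin N) ℝ)
    (hP : ∀ i j : Fin N, P i j = if σ j = i then 1 else 0) :
    P = (σ.symm.toPEquiv.toMatrix : Matrix (Fin N) (Fin N) ℝ) := by
  ext i j
  rw [hP, PEquiv.toMatrix_apply, Equiv.toPEquiv_apply]
  by_cases h : σ j = i
  · simp [← h, Option.mem_def]
  · have : ¬ σ.symm i = j := fun hc => h (by simp [← hc])
    simp [h, Option.mem_def, this]

/-- Relabeling the DAG by a permutation `σ` (with permutation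
matrix `P`, `A' = P A Pᵀ`, `W' = (I - A')⁻¹`) permutes the diagonal matrices
encoding the partial order: `D'_{σ(k)} = P * D k * Pᵀ` for every node `k`. -/
theorem permuted_order_diagonals {N : ℕ} (hN : 1 ≤ N)
    (A : Matrix (Fin N) (Fin N) ℝ)
    (hA : ∀ i j : Fin N, i ≤ j → A i j = 0)
    (W : Matrix (Fin N) (Fin N) ℝ) (hW : W = (1 - A)⁻¹)
    (D : Fin N → Matrix (Fin N) (Fin N) ℝ)
    (hD : ∀ k, D k = Matrix.diagonal (fun i => if W k i ≠ 0 then (1 : ℝ) else 0))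
    (σ : Equiv.Perm (Fin N))
    (P : Matrix (Fin N) (Fin N) ℝ)
    (hP : ∀ i j : Fin N, P i j = if σ j = i then 1 else 0)
    (A' : Matrix (Fin N) (Fin N) ℝ) (hA'def : A' = P * A * Pᵀ)
    (W' : Matrix (Fin N) (Fin N) ℝ) (hW' : W' = (1 - A')⁻¹)
    (D' : Fin N → Matrix (Fin N) (Fin N) ℝ)
    (hD' : ∀ q, D' q = Matrix.diagonal (fun i => if W' q i ≠ 0 then (1 : ℝ) else 0)) :
    ∀ k : Fin N, D' (σ k) = P * D k * Pᵀ := by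
  have hPeq := P_eq_toMatrix σ P hP
  have hPt : Pᵀ = (σ.toPEquiv.toMatrix : Matrix (Fin N) (Fin N) ℝ) := by
    rw [hPeq, ← PEquiv.toMatrix_symm, Equiv.toPEquiv_symm, PEquiv.symm_symm]
  -- conjugation acts as submatrix by σ.symm on both indices
  have hconj : ∀ M : Matrix (Fin N) (Fin N) ℝ,
      P * M * Pᵀ = M.submatrix σ.symm σ.symm := by
    intro M
    rw [hPt, PEquiv.mul_toMatrix_toPEquiv, hPeq, PEquiv.toMatrix_toPEquiv_mul,
      Matrix.submatrix_submatrix]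
    rfl
  -- P is invertible with inverse Pᵀ
  have hPPt : P * Pᵀ = 1 := by
    rw [hPt, hPeq, ← PEquiv.toMatrix_trans, ← Equiv.toPEquiv_trans]
    simp
  have hPtP : Pᵀ * P = 1 := by
    rw [hPt, hPeq, ← PEquiv.toMatrix_trans, ← Equiv.toPEquiv_trans]
    simp
  have hPinv : P⁻¹ = Pᵀ := Matrix.inv_eq_right_inv hPPt
  have hPtinv : Pᵀ⁻¹ = P := Matrix.inv_eq_right_inv hPtP
  have h1A' : (1 : Matrix (Fin N) (Fin N) ℝ) - A' = P * (1 - A) * Pᵀ := by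
    rw [hA'def, Matrix.mul_sub, Matrix.sub_mul, Matrix.mul_one, hPPt]
  have hW'eq : W' = W.submatrix σ.symm σ.symm := by
    rw [hW', h1A', Matrix.mul_inv_rev, Matrix.mul_inv_rev, hPinv, hPtinv, ← hW,
      ← Matrix.mul_assoc, hconj]
  intro k
  rw [hD', hD, hconj, Matrix.submatrix_diagonal _ _ σ.symm.injective]
  apply congrArg Matrix.diagonal
  funext i
  rw [hW'eq]
  simp [Matrix.submatrix_apply, Function.comp]
end

section
/- (Theorem 1, part 1) Let N ≥ 1, let A be an N×N real strictly lower triangular matrix with weighted transitive closure W = (I − A)⁻¹, diagonal matrices D_k ((D_k) i i = 1 iff W k i ≠ 0), and causal graph-shift operators S_k = W · D_k · W⁻¹. Let σ be a permutation of Fin N with permutation matrix P, and define the permuted objects A' = P A Pᵀ, W' = (I − A')⁻¹, D'_q ((D'_q) i i = 1 iff W' q i ≠ 0), and S'_q = W' · D'_q · W'⁻¹. Then for every node k, the permuted causal GSO satisfies S'_{σ(k)} = P · S_k · Pᵀ. -/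
open Matrix BigOperators

/-- Theorem 1, part 1: Relabeling the DAG by a permutation `σ`
(with permutation matrix `P`) transforms the causal graph-shift operators as
`S'_{σ(k)} = P * S k * Pᵀ` for every node `k`. -/
theorem permuted_causal_gso {N : ℕ} (hN : 1 ≤ N)
    (A : Matrix (Fin N) (Fin N) ℝ)
    (hA : ∀ i j : Fin N, i ≤ j → A i j = 0)
    (W : Matrix (Fin N) (Fin N) ℝ) (hW : W = (1 - A)⁻¹)
    (D : Fin N → Matrix (Fin N) (Fin N) ℝ)
    (hD : ∀ k, D k = Matrix.diagonal (fun i => if W k i ≠ 0 then (1 : ℝ) else 0))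
    (S : Fin N → Matrix (Fin N) (Fin N) ℝ)
    (hS : ∀ k, S k = W * D k * W⁻¹)
    (σ : Equiv.Perm (Fin N))
    (P : Matrix (Fin N) (Fin N) ℝ)
    (hP : ∀ i j : Fin N, P i j = if σ j = i then 1 else 0)
    (A' : Matrix (Fin N) (Fin N) ℝ) (hA'def : A' = P * A * Pᵀ)
    (W' : Matrix (Fin N) (Fin N) ℝ) (hW' : W' = (1 - A')⁻¹)
    (D' : Fin N → Matrix (Fin N) (Fin N) ℝ)
    (hD' : ∀ q, D' q = Matrix.diagonal (fun i => if W' q i ≠ 0 then (1 : ℝ) else 0))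
    (S' : Fin N → Matrix (Fin N) (Fin N) ℝ)
    (hS' : ∀ q, S' q = W' * D' q * W'⁻¹) :
    ∀ k : Fin N, S' (σ k) = P * S k * Pᵀ := by
  intro k
  -- entry formula for P
  have hP' : ∀ i j : Fin N, P i j = if j = σ.symm i then 1 else 0 := by
    intro i j
    rw [hP]
    congr 1
    simp [Equiv.eq_symm_apply, eq_comm]
  -- conjugation formula
  have hconj : ∀ (M : Matrix (Fin N) (Fin N) ℝ) (i j : Fin N),
      (P * M * Pᵀ) i j = M (σ.symm i) (σ.symm j) := by
    intro M i j
    simp [Matrix.mul_apply, Matrix.transpose_apply, hP', ite_mul, mul_ite,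
      Finset.sum_ite_eq, Finset.sum_ite_eq']
  have hPPt : P * Pᵀ = 1 := by
    ext i j
    have := hconj 1 i j
    simpa [Matrix.mul_one, Matrix.one_apply, (σ.symm.injective.eq_iff)] using this
  have hPtP : Pᵀ * P = 1 := mul_eq_one_comm.mp hPPt
  have hPinv : P⁻¹ = Pᵀ := Matrix.inv_eq_right_inv hPPt
  have hPtinv : Pᵀ⁻¹ = P := by
    rw [← Matrix.transpose_nonsing_inv, hPinv, Matrix.transpose_transpose]
  -- determinant of 1 - A
  have hdet : (1 - A).det = 1 := by
    have ht : (1 - A).BlockTriangular (OrderDual.toDual) := by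
      intro i j h
      have hij : i < j := h
      simp [Matrix.sub_apply, Matrix.one_apply, hA i j hij.le, hij.ne]
    rw [Matrix.det_of_lowerTriangular _ ht]
    have : ∀ i : Fin N, (1 - A) i i = 1 := by
      intro i
      simp [Matrix.sub_apply, hA i i le_rfl]
    simp [this]
  have hU : IsUnit (1 - A).det := by rw [hdet]; exact isUnit_one
  have hWinv : W⁻¹ = 1 - A := by
    rw [hW, Matrix.nonsing_inv_nonsing_inv _ hU]
  -- W' = P W Pᵀ
  have h1A' : 1 - A' = P * (1 - A) * Pᵀ := by
    rw [hA'def, Matrix.mul_sub, Matrix.mul_one, Matrix.sub_mul, hPPt]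
  have hW'eq : W' = P * W * Pᵀ := by
    rw [hW', h1A', Matrix.mul_inv_rev, Matrix.mul_inv_rev, hPtinv, hPinv, hW,
      Matrix.mul_assoc]
  have hW'inv : W'⁻¹ = P * W⁻¹ * Pᵀ := by
    rw [hW'eq, Matrix.mul_inv_rev, Matrix.mul_inv_rev, hPtinv, hPinv, Matrix.mul_assoc]
  -- D' (σ k) = P * D k * Pᵀ
  have hD'eq : D' (σ k) = P * D k * Pᵀ := by
    ext i j
    rw [hconj, hD, hD']
    by_cases h : i = j
    · subst h
      have hent : W' (σ k) i = W k (σ.symm i) := by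
        rw [hW'eq, hconj]
        simp
      simp [Matrix.diagonal_apply_eq, hent]
    · have h2 : σ.symm i ≠ σ.symm j := fun hc => h (σ.symm.injective hc)
      simp [Matrix.diagonal_apply_ne, h, h2]
  -- conclude
  have hcancel : ∀ X : Matrix (Fin N) (Fin N) ℝ, Pᵀ * (P * X) = X := by
    intro X
    rw [← Matrix.mul_assoc, hPtP, Matrix.one_mul]
  rw [hS', hS, hW'inv, hW'eq, hD'eq]
  simp only [Matrix.mul_assoc, hcancel]
end

section
/- (Theorem 1, part 2: permutation equivariance of causal graph filters) Let N ≥ 1, let A be an N×N real strictly lower triangular matrix with causal graph-shift operators S_k = W · D_k · W⁻¹, and let σ be a permutation of Fin N with permutation matrix P, yielding permuted GSOs S'_q built from A' = P A Pᵀ. For filter coefficients θ ∈ ℝ^N define the causal graph filter output g(x; θ) = ∑_{k} θ_k · S_k · x, and let θ' ∈ ℝ^N be given by θ'_{σ(k)} = θ_k (i.e., θ' = P θ) and x' = P x. Then ∑_{q} θ'_q · S'_q · x' = P · (∑_{k} θ_k · S_k · x) for every x ∈ ℝ^N. -/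
open Matrix BigOperators

/-- Theorem 1, part 2: Causal graph filters are permutation
equivariant: with permuted coefficients `θ'_{σ(k)} = θ k` and permuted input
`x' = P x`, we have `∑_q θ'_q • S'_q x' = P (∑_k θ_k • S_k x)`. -/
theorem causal_graph_filter_equivariant {N : ℕ} (hN : 1 ≤ N)
    (A : Matrix (Fin N) (Fin N) ℝ)
    (hA : ∀ i j : Fin N, i ≤ j → A i j = 0)
    (W : Matrix (Fin N) (Fin N) ℝ) (hW : W = (1 - A)⁻¹)
    (D : Fin N → Matrix (Fin N) (Fin N) ℝ)
    (hD : ∀ k, D k = Matrix.diagonal (fun i => if W k i ≠ 0 then (1 : ℝ) else 0))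
    (S : Fin N → Matrix (Fin N) (Fin N) ℝ)
    (hS : ∀ k, S k = W * D k * W⁻¹)
    (σ : Equiv.Perm (Fin N))
    (P : Matrix (Fin N) (Fin N) ℝ)
    (hP : ∀ i j : Fin N, P i j = if σ j = i then 1 else 0)
    (A' : Matrix (Fin N) (Fin N) ℝ) (hA'def : A' = P * A * Pᵀ)
    (W' : Matrix (Fin N) (Fin N) ℝ) (hW' : W' = (1 - A')⁻¹)
    (D' : Fin N → Matrix (Fin N) (Fin N) ℝ)
    (hD' : ∀ q, D' q = Matrix.diagonal (fun i => if W' q i ≠ 0 then (1 : ℝ) else 0))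
    (S' : Fin N → Matrix (Fin N) (Fin N) ℝ)
    (hS' : ∀ q, S' q = W' * D' q * W'⁻¹)
    (θ θ' : Fin N → ℝ) (hθ' : ∀ k : Fin N, θ' (σ k) = θ k)
    (x x' : Fin N → ℝ) (hx' : x' = P *ᵥ x) :
    ∑ q : Fin N, θ' q • (S' q *ᵥ x') = P *ᵥ (∑ k : Fin N, θ k • (S k *ᵥ x)) := by
  -- P as a submatrix of the identity
  have hPsub : P = (1 : Matrix (Fin N) (Fin N) ℝ).submatrix (σ.symm : Fin N → Fin N) id := by
    ext i j
    simp only [hP, Matrix.submatrix_apply, Matrix.one_apply, id_eq]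
    by_cases h : σ j = i
    · simp [h.symm, Equiv.symm_apply_apply]
    · have h2 : σ.symm i ≠ j := fun hc => h (by rw [← hc]; simp)
      simp [h, h2]
  have hPM : ∀ M : Matrix (Fin N) (Fin N) ℝ,
      P * M = M.submatrix (σ.symm : Fin N → Fin N) id := by
    intro M
    rw [hPsub]
    have := Matrix.submatrix_mul_equiv (1 : Matrix (Fin N) (Fin N) ℝ) M
      (σ.symm : Fin N → Fin N) (Equiv.refl (Fin N)) (id : Fin N → Fin N)
    simpa using this
  have hMPt : ∀ M : Matrix (Fin N) (Fin N) ℝ,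
      M * Pᵀ = M.submatrix id (σ.symm : Fin N → Fin N) := by
    intro M
    have hPt : Pᵀ = (1 : Matrix (Fin N) (Fin N) ℝ).submatrix id (σ.symm : Fin N → Fin N) := by
      rw [hPsub]
      ext i j
      simp [Matrix.one_apply, eq_comm]
    rw [hPt]
    have := Matrix.submatrix_mul_equiv M (1 : Matrix (Fin N) (Fin N) ℝ)
      (id : Fin N → Fin N) (Equiv.refl (Fin N)) (σ.symm : Fin N → Fin N)
    simpa using this
  -- A' is the relabelled A
  have hA's : A' = A.submatrix (σ.symm : Fin N → Fin N) (σ.symm : Fin N → Fin N) := by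
    rw [hA'def, hPM, hMPt]
    rfl
  -- W' is the relabelled W
  have hW's : W' = W.submatrix (σ.symm : Fin N → Fin N) (σ.symm : Fin N → Fin N) := by
    rw [hW', hA's, hW]
    have h1 : (1 : Matrix (Fin N) (Fin N) ℝ) - A.submatrix (σ.symm : Fin N → Fin N) σ.symm
        = ((1 : Matrix (Fin N) (Fin N) ℝ) - A).submatrix (σ.symm : Fin N → Fin N) σ.symm := by
      ext i j
      by_cases h : i = j <;>
        simp [Matrix.sub_apply, Matrix.one_apply, h, EmbeddingLike.apply_eq_iff_eq]
    rw [h1]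
    exact Matrix.inv_submatrix_equiv (1 - A) σ.symm σ.symm
  -- D' at relabelled index
  have hD's : ∀ k, D' (σ k) = (D k).submatrix (σ.symm : Fin N → Fin N) σ.symm := by
    intro k
    ext i j
    by_cases h : (σ.symm i : Fin N) = σ.symm j
    · have hij : i = j := σ.symm.injective h
      subst hij
      simp [hD', hD, hW's, Matrix.diagonal_apply_eq, Equiv.symm_apply_apply]
    · have hij : i ≠ j := fun hc => h (by rw [hc])
      simp [hD', hD, Matrix.diagonal_apply_ne _ hij, Matrix.diagonal_apply_ne _ h]
  -- S' at relabelled index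
  have hS's : ∀ k, S' (σ k) = (S k).submatrix (σ.symm : Fin N → Fin N) σ.symm := by
    intro k
    rw [hS', hS, hW's, hD's k]
    rw [Matrix.inv_submatrix_equiv W σ.symm σ.symm]
    rw [Matrix.submatrix_mul_equiv, Matrix.submatrix_mul_equiv]
  -- P acting on vectors
  have hPv : ∀ v : Fin N → ℝ, P *ᵥ v = v ∘ (σ.symm : Fin N → Fin N) := by
    intro v
    rw [hPsub]
    have := Matrix.submatrix_mulVec_equiv (1 : Matrix (Fin N) (Fin N) ℝ) v
      (σ.symm : Fin N → Fin N) (Equiv.refl (Fin N))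
    simpa using this
  -- conclude
  rw [hx', hPv, hPv]
  rw [← Equiv.sum_comp σ (fun q => θ' q • (S' q *ᵥ (x ∘ (σ.symm : Fin N → Fin N))))]
  have hterm : ∀ k, θ' (σ k) • (S' (σ k) *ᵥ (x ∘ (σ.symm : Fin N → Fin N)))
      = (θ k • (S k *ᵥ x)) ∘ (σ.symm : Fin N → Fin N) := by
    intro k
    rw [hθ', hS's, Matrix.submatrix_mulVec_equiv]
    have hx2 : (x ∘ (σ.symm : Fin N → Fin N)) ∘ (σ.symm.symm : Fin N → Fin N) = x := by
      funext i; simp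
    rw [hx2]
    rfl
  simp_rw [hterm]
  funext i
  simp [Finset.sum_apply]
end

section
/- (Corollary 1: permutation equivariance of the DAG Convolutional Network) Let N ≥ 1, let A be an N×N real strictly lower triangular matrix with causal graph-shift operators S_k = W · D_k · W⁻¹, and let σ be a permutation of Fin N with permutation matrix P, yielding permuted GSOs S'_q built from A' = P A Pᵀ. Fix L ≥ 1, feature dimensions F_0, …, F_L, a function ρ : ℝ → ℝ applied entrywise to matrices, and for each layer ℓ ∈ {1,…,L} and node k a parameter matrix Θ_k^{(ℓ)} ∈ ℝ^{F_{ℓ−1} × F_ℓ}. From an input X^{(0)} ∈ ℝ^{N × F_0} define recursively X^{(ℓ)} = ρ.(∑_k S_k · X^{(ℓ−1)} · Θ_k^{(ℓ)}), and define the permuted network output X'^{(ℓ)} by the same recursion with S'_q in place of S_k, permuted parameters Θ'^{(ℓ)}_{σ(k)} = Θ_k^{(ℓ)}, and input X'^{(0)} = P · X^{(0)}. Then X'^{(L)} = P · X^{(L)}. -/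
open Matrix BigOperators

/-- Corollary 1: The DAG Convolutional Network is permutation
equivariant. With layer recursion `X^{(ℓ+1)} = ρ.(∑_k S_k X^{(ℓ)} Θ_k^{(ℓ)})`,
permuted parameters `Θ'_{σ(k)} = Θ_k`, permuted GSOs `S'_q`, and permuted input
`X'^{(0)} = P X^{(0)}`, the outputs satisfy `X'^{(L)} = P X^{(L)}`. -/
theorem dcn_permutation_equivariant {N : ℕ} (hN : 1 ≤ N)
    (A : Matrix (Fin N) (Fin N) ℝ)
    (hA : ∀ i j : Fin N, i ≤ j → A i j = 0)
    (W : Matrix (Fin N) (Fin N) ℝ) (hW : W = (1 - A)⁻¹)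
    (D : Fin N → Matrix (Fin N) (Fin N) ℝ)
    (hD : ∀ k, D k = Matrix.diagonal (fun i => if W k i ≠ 0 then (1 : ℝ) else 0))
    (S : Fin N → Matrix (Fin N) (Fin N) ℝ)
    (hS : ∀ k, S k = W * D k * W⁻¹)
    (σ : Equiv.Perm (Fin N))
    (P : Matrix (Fin N) (Fin N) ℝ)
    (hP : ∀ i j : Fin N, P i j = if σ j = i then 1 else 0)
    (A' : Matrix (Fin N) (Fin N) ℝ) (hA'def : A' = P * A * Pᵀ)
    (W' : Matrix (Fin N) (Fin N) ℝ) (hW' : W' = (1 - A')⁻¹)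
    (D' : Fin N → Matrix (Fin N) (Fin N) ℝ)
    (hD' : ∀ q, D' q = Matrix.diagonal (fun i => if W' q i ≠ 0 then (1 : ℝ) else 0))
    (S' : Fin N → Matrix (Fin N) (Fin N) ℝ)
    (hS' : ∀ q, S' q = W' * D' q * W'⁻¹)
    (L : ℕ) (hL : 1 ≤ L)
    (F : ℕ → ℕ)
    (ρ : ℝ → ℝ)
    (Θ Θ' : (ℓ : ℕ) → Fin N → Matrix (Fin (F ℓ)) (Fin (F (ℓ + 1))) ℝ)
    (hΘ' : ∀ (ℓ : ℕ) (k : Fin N), Θ' ℓ (σ k) = Θ ℓ k)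
    (X X' : (ℓ : ℕ) → Matrix (Fin N) (Fin (F ℓ)) ℝ)
    (hX'0 : X' 0 = P * X 0)
    (hXrec : ∀ ℓ : ℕ, X (ℓ + 1) = (∑ k : Fin N, S k * X ℓ * Θ ℓ k).map ρ)
    (hX'rec : ∀ ℓ : ℕ, X' (ℓ + 1) = (∑ q : Fin N, S' q * X' ℓ * Θ' ℓ q).map ρ) :
    X' L = P * X L := by

  -- basic facts about P
  have hPmul : ∀ {m : ℕ} (M : Matrix (Fin N) (Fin m) ℝ) (i : Fin N) (j : Fin m),
      (P * M) i j = M (σ.symm i) j := by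
    intro m M i j
    simp [Matrix.mul_apply, hP, Equiv.apply_eq_iff_eq_symm_apply]
  have hmulPT : ∀ (M : Matrix (Fin N) (Fin N) ℝ) (i j : Fin N),
      (M * Pᵀ) i j = M i (σ.symm j) := by
    intro M i j
    simp [Matrix.mul_apply, hP, Matrix.transpose_apply, Equiv.apply_eq_iff_eq_symm_apply]
  have hPPT : P * Pᵀ = 1 := by
    ext i j
    rw [hPmul]
    simp [Matrix.transpose_apply, hP, Matrix.one_apply, Equiv.apply_eq_iff_eq_symm_apply, eq_comm]
  have hPdet : IsUnit P.det := Matrix.isUnit_det_of_right_inverse hPPT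
  have hPinv : P⁻¹ = Pᵀ := Matrix.inv_eq_right_inv hPPT
  have hPTP : Pᵀ * P = 1 := by
    rw [← hPinv]; exact Matrix.nonsing_inv_mul P hPdet
  have hPTinv : Pᵀ⁻¹ = P := Matrix.inv_eq_right_inv hPTP
  have cancel : ∀ {m : ℕ} (M : Matrix (Fin N) (Fin m) ℝ), Pᵀ * (P * M) = M := by
    intro m M; rw [← Matrix.mul_assoc, hPTP, Matrix.one_mul]
  -- W' = P W Pᵀ
  have hsub : (1 : Matrix (Fin N) (Fin N) ℝ) - A' = P * (1 - A) * Pᵀ := by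
    rw [hA'def, Matrix.mul_sub, Matrix.mul_one, Matrix.sub_mul, hPPT]
  have hWP : W' = P * W * Pᵀ := by
    rw [hW', hsub, Matrix.mul_inv_rev, Matrix.mul_inv_rev, hPinv, hPTinv, hW,
      Matrix.mul_assoc]
  have hWPinv : W'⁻¹ = P * W⁻¹ * Pᵀ := by
    rw [hWP, Matrix.mul_inv_rev, Matrix.mul_inv_rev, hPinv, hPTinv, Matrix.mul_assoc]
  -- D' (σ k) = P (D k) Pᵀ
  have hDk : ∀ k : Fin N, D' (σ k) = P * D k * Pᵀ := by
    intro k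
    ext i j
    rw [hmulPT, hPmul, hD' (σ k), hD k]
    have hw : W' (σ k) i = W k (σ.symm i) := by
      rw [hWP, hmulPT, hPmul, Equiv.symm_apply_apply]
    by_cases hij : i = j
    · subst hij
      simp [Matrix.diagonal_apply_eq, hw]
    · have : σ.symm i ≠ σ.symm j := fun h => hij (σ.symm.injective h)
      simp [Matrix.diagonal_apply_ne _ hij, Matrix.diagonal_apply_ne _ this]
  -- S' (σ k) = P (S k) Pᵀ
  have hSk : ∀ k : Fin N, S' (σ k) = P * S k * Pᵀ := by
    intro k
    rw [hS', hS, hWPinv, hWP, hDk]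
    simp only [Matrix.mul_assoc, cancel]
  -- map commutes with P
  have hmap : ∀ {m : ℕ} (M : Matrix (Fin N) (Fin m) ℝ),
      (P * M).map ρ = P * M.map ρ := by
    intro m M
    ext i j
    simp [Matrix.map_apply, hPmul]
  -- main induction
  have key : ∀ ℓ : ℕ, X' ℓ = P * X ℓ := by
    intro ℓ
    induction ℓ with
    | zero => exact hX'0
    | succ n ih =>
      have hsum : ∑ k : Fin N, P * (S k * X n * Θ n k)
          = ∑ q : Fin N, S' q * (P * X n) * Θ' n q := by
        refine Fintype.sum_equiv σ _ _ fun k => ?_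
        rw [hΘ' n k, hSk k]
        simp only [Matrix.mul_assoc, cancel]
      rw [hX'rec n, hXrec n, ih, ← hmap, Matrix.mul_sum, hsum]
  exact key L
end

section
/- (Corollary 2: permutation equivariance of the Parallel DAG Convolutional Network) Let N ≥ 1, let A be an N×N real strictly lower triangular matrix with causal graph-shift operators S_k = W · D_k · W⁻¹, and let σ be a permutation of Fin N with permutation matrix P, yielding permuted GSOs S'_q built from A' = P A Pᵀ. Fix L ≥ 1, feature dimensions F_0, …, F_L, a function ρ : ℝ → ℝ applied entrywise to matrices, and shared parameter matrices Θ^{(ℓ)} ∈ ℝ^{F_{ℓ−1} × F_ℓ} for ℓ ∈ {1,…,L}; define MLP(Y) = ρ.( … ρ.(Y · Θ^{(1)}) … · Θ^{(L)}), i.e., the L-fold alternation of right multiplication by Θ^{(ℓ)} and entrywise ρ. Then for every input X ∈ ℝ^{N × F_0}, ∑_q MLP(S'_q · (P · X)) = P · ∑_k MLP(S_k · X). -/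
open Matrix BigOperators

/-- The shared multilayer perceptron of the Parallel DCN: the `L`-fold
alternation of right multiplication by the parameter matrices `Θ ℓ` and
entrywise application of the activation `ρ`. -/
def sharedMLP {N : ℕ} (F : ℕ → ℕ) (ρ : ℝ → ℝ)
    (Θ : (ℓ : ℕ) → Matrix (Fin (F ℓ)) (Fin (F (ℓ + 1))) ℝ) :
    (L : ℕ) → Matrix (Fin N) (Fin (F 0)) ℝ → Matrix (Fin N) (Fin (F L)) ℝ
  | 0, Y => Y
  | L + 1, Y => ((sharedMLP F ρ Θ L Y) * Θ L).map ρ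

lemma submatrix_mul_right {N n m : ℕ} (e : Equiv.Perm (Fin N))
    (M : Matrix (Fin N) (Fin n) ℝ) (T : Matrix (Fin n) (Fin m) ℝ) :
    (M.submatrix e id) * T = (M * T).submatrix e id := by
  ext i j
  simp [Matrix.mul_apply]

lemma sharedMLP_perm {N : ℕ} (F : ℕ → ℕ) (ρ : ℝ → ℝ)
    (Θ : (ℓ : ℕ) → Matrix (Fin (F ℓ)) (Fin (F (ℓ + 1))) ℝ)
    (e : Equiv.Perm (Fin N)) :
    ∀ (L : ℕ) (Y : Matrix (Fin N) (Fin (F 0)) ℝ),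
      sharedMLP F ρ Θ L (Y.submatrix e id) = (sharedMLP F ρ Θ L Y).submatrix e id
  | 0, Y => rfl
  | L + 1, Y => by
      rw [sharedMLP, sharedMLP, sharedMLP_perm F ρ Θ e L Y, submatrix_mul_right,
        Matrix.submatrix_map]

/-- Corollary 2: The Parallel DAG Convolutional Network is
permutation equivariant: `∑_q MLP(S'_q (P X)) = P ∑_k MLP(S_k X)`. -/
theorem pdcn_permutation_equivariant {N : ℕ} (hN : 1 ≤ N)
    (A : Matrix (Fin N) (Fin N) ℝ)
    (hA : ∀ i j : Fin N, i ≤ j → A i j = 0)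
    (W : Matrix (Fin N) (Fin N) ℝ) (hW : W = (1 - A)⁻¹)
    (D : Fin N → Matrix (Fin N) (Fin N) ℝ)
    (hD : ∀ k, D k = Matrix.diagonal (fun i => if W k i ≠ 0 then (1 : ℝ) else 0))
    (S : Fin N → Matrix (Fin N) (Fin N) ℝ)
    (hS : ∀ k, S k = W * D k * W⁻¹)
    (σ : Equiv.Perm (Fin N))
    (P : Matrix (Fin N) (Fin N) ℝ)
    (hP : ∀ i j : Fin N, P i j = if σ j = i then 1 else 0)
    (A' : Matrix (Fin N) (Fin N) ℝ) (hA'def : A' = P * A * Pᵀ)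
    (W' : Matrix (Fin N) (Fin N) ℝ) (hW' : W' = (1 - A')⁻¹)
    (D' : Fin N → Matrix (Fin N) (Fin N) ℝ)
    (hD' : ∀ q, D' q = Matrix.diagonal (fun i => if W' q i ≠ 0 then (1 : ℝ) else 0))
    (S' : Fin N → Matrix (Fin N) (Fin N) ℝ)
    (hS' : ∀ q, S' q = W' * D' q * W'⁻¹)
    (L : ℕ) (hL : 1 ≤ L)
    (F : ℕ → ℕ)
    (ρ : ℝ → ℝ)
    (Θ : (ℓ : ℕ) → Matrix (Fin (F ℓ)) (Fin (F (ℓ + 1))) ℝ)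
    (X : Matrix (Fin N) (Fin (F 0)) ℝ) :
    ∑ q : Fin N, sharedMLP F ρ Θ L (S' q * (P * X)) =
      P * ∑ k : Fin N, sharedMLP F ρ Θ L (S k * X) := by
  -- identify P with the PEquiv matrix of σ.symm
  have hPeq : P = (σ.symm).toPEquiv.toMatrix := by
    ext i j
    rw [hP, PEquiv.toMatrix_apply, Equiv.toPEquiv_apply]
    have key : (j ∈ some (σ.symm i)) ↔ (σ j = i) := by
      simp only [Option.mem_def, Option.some.injEq]
      constructor
      · intro h; subst h; simp
      · intro h; subst h; simp
    simp only [key]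
  have hPT : Pᵀ = σ.toPEquiv.toMatrix := by
    rw [hPeq, ← PEquiv.toMatrix_symm, ← Equiv.toPEquiv_symm, Equiv.symm_symm]
  have hPsub : ∀ {n : ℕ} (M : Matrix (Fin N) (Fin n) ℝ),
      P * M = M.submatrix σ.symm id := by
    intro n M
    rw [hPeq, PEquiv.toMatrix_toPEquiv_mul]
  have hconj : ∀ M : Matrix (Fin N) (Fin N) ℝ,
      P * M * Pᵀ = M.submatrix σ.symm σ.symm := by
    intro M
    rw [hPsub, hPT, PEquiv.mul_toMatrix_toPEquiv, Matrix.submatrix_submatrix]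
    rfl
  have hPPt : P * Pᵀ = 1 := by
    have := hconj 1
    rw [Matrix.mul_one] at this
    rw [this, Matrix.submatrix_one_equiv]
  have hPtP : Pᵀ * P = 1 := mul_eq_one_comm.mp hPPt
  have hPinv : P⁻¹ = Pᵀ := Matrix.inv_eq_right_inv hPPt
  have hPtinv : Pᵀ⁻¹ = P := Matrix.inv_eq_right_inv hPtP
  -- transitive closure conjugation
  have h1A : 1 - A' = P * (1 - A) * Pᵀ := by
    rw [hA'def, Matrix.mul_sub, Matrix.mul_one, Matrix.sub_mul, hPPt]
  have hW'c : W' = P * W * Pᵀ := by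
    rw [hW', h1A, Matrix.mul_inv_rev, Matrix.mul_inv_rev, hPinv, hPtinv, hW,
      Matrix.mul_assoc]
  have hW'inv : W'⁻¹ = P * W⁻¹ * Pᵀ := by
    rw [hW'c, Matrix.mul_inv_rev, Matrix.mul_inv_rev, hPinv, hPtinv, Matrix.mul_assoc]
  -- diagonal matrices conjugation
  have hD'c : ∀ k, D' (σ k) = P * D k * Pᵀ := by
    intro k
    have hfun : (fun i => if W' (σ k) i ≠ 0 then (1 : ℝ) else 0)
        = (fun i => if W k i ≠ 0 then (1 : ℝ) else 0) ∘ σ.symm := by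
      funext i
      have hwi : W' (σ k) i = W k (σ.symm i) := by
        rw [hW'c, hconj]; simp
      simp [Function.comp, hwi]
    rw [hconj, hD', hD, Matrix.submatrix_diagonal_equiv, hfun]
  -- GSO conjugation
  have hS'c : ∀ k, S' (σ k) = P * S k * Pᵀ := by
    intro k
    rw [hS', hW'inv, hW'c, hD'c, hS]
    simp only [Matrix.mul_assoc]
    rw [← Matrix.mul_assoc Pᵀ P, hPtP, Matrix.one_mul,
      ← Matrix.mul_assoc Pᵀ P, hPtP, Matrix.one_mul]
  -- main computation
  have hterm : ∀ k, S' (σ k) * (P * X) = P * (S k * X) := by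
    intro k
    rw [hS'c]
    calc P * S k * Pᵀ * (P * X) = P * S k * (Pᵀ * P) * X := by
          simp only [Matrix.mul_assoc]
      _ = P * (S k * X) := by rw [hPtP, Matrix.mul_one, Matrix.mul_assoc]
  calc ∑ q : Fin N, sharedMLP F ρ Θ L (S' q * (P * X))
      = ∑ k : Fin N, sharedMLP F ρ Θ L (S' (σ k) * (P * X)) :=
        (Equiv.sum_comp σ _).symm
    _ = ∑ k : Fin N, P * sharedMLP F ρ Θ L (S k * X) := by
        refine Finset.sum_congr rfl fun k _ => ?_
        rw [hterm k, hPsub, sharedMLP_perm, hPsub]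
    _ = P * ∑ k : Fin N, sharedMLP F ρ Θ L (S k * X) :=
by
        rw [Matrix.mul_sum]
end

section
/- (Equivariance of causal graph filters restricted to a subset of GSOs) Let N ≥ 1, let A be an N×N real strictly lower triangular matrix with causal graph-shift operators S_k = W · D_k · W⁻¹, and let U ⊆ Fin N. Let σ be a permutation of Fin N that fixes every node outside U (σ(i) = i for all i ∉ U), with permutation matrix P, and let S'_q be the permuted GSOs built from A' = P A Pᵀ. Then for all coefficients θ ∈ ℝ^N with θ'_{σ(k)} = θ_k and all x ∈ ℝ^N, the filter using only the GSOs indexed by U is equivariant: ∑_{q ∈ U} θ'_q · S'_q · (P x) = P · (∑_{k ∈ U} θ_k · S_k · x). -/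
open Matrix BigOperators

/-- Equivariance of causal graph filters restricted to a subset
`U` of GSOs: if the permutation `σ` fixes every node outside `U`, then
`∑_{q ∈ U} θ'_q • S'_q (P x) = P (∑_{k ∈ U} θ_k • S_k x)`. -/
theorem restricted_causal_graph_filter_equivariant {N : ℕ} (hN : 1 ≤ N)
    (A : Matrix (Fin N) (Fin N) ℝ)
    (hA : ∀ i j : Fin N, i ≤ j → A i j = 0)
    (W : Matrix (Fin N) (Fin N) ℝ) (hW : W = (1 - A)⁻¹)
    (D : Fin N → Matrix (Fin N) (Fin N) ℝ)
    (hD : ∀ k, D k = Matrix.diagonal (fun i => if W k i ≠ 0 then (1 : ℝ) else 0))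
    (S : Fin N → Matrix (Fin N) (Fin N) ℝ)
    (hS : ∀ k, S k = W * D k * W⁻¹)
    (U : Finset (Fin N))
    (σ : Equiv.Perm (Fin N))
    (hσU : ∀ i : Fin N, i ∉ U → σ i = i)
    (P : Matrix (Fin N) (Fin N) ℝ)
    (hP : ∀ i j : Fin N, P i j = if σ j = i then 1 else 0)
    (A' : Matrix (Fin N) (Fin N) ℝ) (hA'def : A' = P * A * Pᵀ)
    (W' : Matrix (Fin N) (Fin N) ℝ) (hW' : W' = (1 - A')⁻¹)
    (D' : Fin N → Matrix (Fin N) (Fin N) ℝ)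
    (hD' : ∀ q, D' q = Matrix.diagonal (fun i => if W' q i ≠ 0 then (1 : ℝ) else 0))
    (S' : Fin N → Matrix (Fin N) (Fin N) ℝ)
    (hS' : ∀ q, S' q = W' * D' q * W'⁻¹)
    (θ θ' : Fin N → ℝ) (hθ' : ∀ k : Fin N, θ' (σ k) = θ k)
    (x : Fin N → ℝ) :
    ∑ q ∈ U, θ' q • (S' q *ᵥ (P *ᵥ x)) = P *ᵥ (∑ k ∈ U, θ k • (S k *ᵥ x)) := by
  -- Permutation matrix facts
  have hPPt : P * Pᵀ = 1 := by
    ext i j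
    simp only [Matrix.mul_apply, hP, Matrix.transpose_apply, Matrix.one_apply,
      Equiv.apply_eq_iff_eq_symm_apply, ite_and, ite_mul, one_mul, zero_mul]
    rw [Finset.sum_ite_eq' _ (σ.symm i)]
    simp [Equiv.symm_apply_eq, eq_comm]
  have hPtP : Pᵀ * P = 1 := by
    ext i j
    simp only [Matrix.mul_apply, hP, Matrix.transpose_apply, Matrix.one_apply, ite_mul, one_mul,
      zero_mul, ite_and]
    rw [Finset.sum_ite_eq _ (σ i)]
    simp [eq_comm]
  have hconj : ∀ M : Matrix (Fin N) (Fin N) ℝ, ∀ i j,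
      (P * M * Pᵀ) i j = M (σ.symm i) (σ.symm j) := by
    intro M i j
    simp [Matrix.mul_apply, hP, Equiv.apply_eq_iff_eq_symm_apply, ite_and,
      Finset.sum_ite_eq', Finset.mul_sum]
  have hPinv : P⁻¹ = Pᵀ := Matrix.inv_eq_right_inv hPPt
  have hPtinv : Pᵀ⁻¹ = P := Matrix.inv_eq_right_inv hPtP
  -- 1 - A' = P (1 - A) Pᵀ
  have h1A' : 1 - A' = P * (1 - A) * Pᵀ := by
    rw [hA'def, Matrix.mul_sub, Matrix.sub_mul, Matrix.mul_one, hPPt]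
  -- W' = P W Pᵀ
  have hW'P : W' = P * W * Pᵀ := by
    rw [hW', h1A', Matrix.mul_inv_rev, Matrix.mul_inv_rev, hPinv, hPtinv, hW,
      Matrix.mul_assoc]
  have hW'inv : W'⁻¹ = P * W⁻¹ * Pᵀ := by
    rw [hW'P, Matrix.mul_inv_rev, Matrix.mul_inv_rev, hPinv, hPtinv, Matrix.mul_assoc]
  -- D' (σ k) = P (D k) Pᵀ
  have hD'eq : ∀ k, D' (σ k) = P * D k * Pᵀ := by
    intro k
    ext i j
    rw [hconj, hD', hD]
    have hWq : ∀ i, W' (σ k) i = W k (σ.symm i) := by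
      intro i
      rw [hW'P, hconj, Equiv.symm_apply_apply]
    by_cases h : i = j
    · subst h
      simp [Matrix.diagonal_apply_eq, hWq]
    · rw [Matrix.diagonal_apply_ne _ h,
        Matrix.diagonal_apply_ne _ (fun hc => h (σ.symm.injective hc))]
  -- S' (σ k) = P (S k) Pᵀ
  have hS'eq : ∀ k, S' (σ k) = P * S k * Pᵀ := by
    intro k
    rw [hS', hS, hD'eq, hW'inv, hW'P]
    calc P * W * Pᵀ * (P * D k * Pᵀ) * (P * W⁻¹ * Pᵀ)
        = P * W * (Pᵀ * P) * D k * (Pᵀ * P) * W⁻¹ * Pᵀ := by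
          simp only [Matrix.mul_assoc]
      _ = P * (W * D k * W⁻¹) * Pᵀ := by
          rw [hPtP]; simp only [Matrix.mul_one, Matrix.mul_assoc]
  -- membership
  have hmem : ∀ k, k ∈ U ↔ σ k ∈ U := by
    intro k
    constructor
    · intro hk
      by_contra h
      have h2 : σ (σ k) = σ k := hσU (σ k) h
      have : σ k = k := σ.injective h2
      rw [this] at h
      exact h hk
    · intro hk
      by_contra h
      rw [hσU k h] at hk
      exact h hk
  -- each term transforms correctly
  have hterm : ∀ k ∈ U, θ k • (P *ᵥ (S k *ᵥ x)) = θ' (σ k) • (S' (σ k) *ᵥ (P *ᵥ x)) := by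
    intro k _
    rw [hθ', hS'eq, Matrix.mulVec_mulVec, Matrix.mulVec_mulVec,
      Matrix.mul_assoc (P * S k) Pᵀ P, hPtP, Matrix.mul_one]
  calc ∑ q ∈ U, θ' q • (S' q *ᵥ (P *ᵥ x))
      = ∑ k ∈ U, θ k • (P *ᵥ (S k *ᵥ x)) := (Finset.sum_equiv σ hmem hterm).symm
    _ = P *ᵥ (∑ k ∈ U, θ k • (S k *ᵥ x)) := by
        rw [← Matrix.mulVecLin_apply, map_sum]
        simp [Matrix.mulVecLin_apply, Matrix.mulVec_smul]
end

section
/- (Causal graph filters are closed under composition) Let N ≥ 1, let A be an N×N real strictly lower triangular matrix, W = (I − A)⁻¹, D_k the diagonal 0/1 matrices with (D_k) i i = 1 iff W k i ≠ 0, and S_k = W · D_k · W⁻¹ the causal graph-shift operators. Then for all coefficient vectors θ, φ ∈ ℝ^N there exists a coefficient vector ψ ∈ ℝ^N such that (∑_k θ_k · S_k) · (∑_k φ_k · S_k) = ∑_k ψ_k · S_k; i.e., the composition of two causal graph filters can always be re-parameterized as a single causal graph filter. -/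
open Matrix BigOperators

/-- Causal graph filters are closed under composition: for all
coefficient vectors `θ`, `φ` there is a coefficient vector `ψ` with
`(∑_k θ_k S_k) * (∑_k φ_k S_k) = ∑_k ψ_k S_k`. -/
theorem causal_graph_filters_closed_under_composition {N : ℕ} (hN : 1 ≤ N)
    (A : Matrix (Fin N) (Fin N) ℝ)
    (hA : ∀ i j : Fin N, i ≤ j → A i j = 0)
    (W : Matrix (Fin N) (Fin N) ℝ) (hW : W = (1 - A)⁻¹)
    (D : Fin N → Matrix (Fin N) (Fin N) ℝ)
    (hD : ∀ k, D k = Matrix.diagonal (fun i => if W k i ≠ 0 then (1 : ℝ) else 0))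
    (S : Fin N → Matrix (Fin N) (Fin N) ℝ)
    (hS : ∀ k, S k = W * D k * W⁻¹) :
    ∀ θ φ : Fin N → ℝ, ∃ ψ : Fin N → ℝ,
      (∑ k : Fin N, θ k • S k) * (∑ k : Fin N, φ k • S k) =
        ∑ k : Fin N, ψ k • S k := by
  intro θ φ
  -- 1 - A is lower triangular with unit diagonal
  have h1A : (1 - A).BlockTriangular OrderDual.toDual := by
    intro i j hij
    have hij' : (i : Fin N) < j := hij
    simp [Matrix.one_apply, hij'.ne, hA i j hij'.le]
  have hdet1A : (1 - A).det = 1 := by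
    rw [Matrix.det_of_lowerTriangular _ h1A]
    have : ∀ i : Fin N, (1 - A) i i = 1 := by
      intro i
      simp [Matrix.one_apply, hA i i le_rfl]
    simp [this]
  have hunit : IsUnit (1 - A).det := by rw [hdet1A]; exact isUnit_one
  haveI : Invertible (1 - A) := (1 - A).invertibleOfIsUnitDet hunit
  -- W is lower triangular
  have hWtri : W.BlockTriangular OrderDual.toDual := by
    rw [hW]
    exact Matrix.blockTriangular_inv_of_blockTriangular h1A
  have hWzero : ∀ i j : Fin N, i < j → W i j = 0 := fun i j h => hWtri h
  -- det W = 1, so diagonal entries of W are nonzero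
  have hdetW : W.det = 1 := by
    rw [hW, Matrix.det_nonsing_inv, hdet1A, Ring.inverse_one]
  have hdiagprod : ∏ i : Fin N, W i i = 1 := by
    rw [← Matrix.det_of_lowerTriangular W hWtri, hdetW]
  have hWdiag : ∀ i : Fin N, W i i ≠ 0 := by
    have : ∏ i : Fin N, W i i ≠ 0 := by rw [hdiagprod]; exact one_ne_zero
    intro i
    exact Finset.prod_ne_zero_iff.mp this i (Finset.mem_univ i)
  -- W is invertible and W⁻¹ * W = 1, W * W⁻¹ = 1
  have hWinv : W⁻¹ * W = 1 := by
    rw [hW, Matrix.nonsing_inv_nonsing_inv _ hunit]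
    exact Matrix.mul_nonsing_inv _ hunit
  -- the indicator matrix
  set M : Matrix (Fin N) (Fin N) ℝ :=
    Matrix.of (fun k i => if W k i ≠ 0 then (1 : ℝ) else 0) with hM
  have hMtri : M.BlockTriangular OrderDual.toDual := by
    intro i j hij
    have hij' : (i : Fin N) < j := hij
    simp [hM, hWzero i j hij']
  have hdetM : M.det = 1 := by
    rw [Matrix.det_of_lowerTriangular _ hMtri]
    have : ∀ i : Fin N, M i i = 1 := by intro i; simp [hM, hWdiag i]
    simp [this]
  have hMunit : IsUnit M.det := by rw [hdetM]; exact isUnit_one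
  -- sums of D's are diagonals
  have hsumD : ∀ c : Fin N → ℝ,
      (∑ k : Fin N, c k • D k) = Matrix.diagonal (fun i => ∑ k : Fin N, c k * M k i) := by
    intro c
    ext i j
    by_cases h : i = j
    · subst h
      simp [hD, Matrix.sum_apply, Matrix.diagonal_apply_eq, hM, mul_ite, mul_one, mul_zero]
    · simp [hD, Matrix.sum_apply, Matrix.diagonal_apply_ne _ h, h]
  -- filters are W * diagonal * W⁻¹
  have hfilter : ∀ c : Fin N → ℝ,
      (∑ k : Fin N, c k • S k)
        = W * Matrix.diagonal (fun i => ∑ k : Fin N, c k * M k i) * W⁻¹ := by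
    intro c
    have : (∑ k : Fin N, c k • S k) = W * (∑ k : Fin N, c k • D k) * W⁻¹ := by
      rw [Finset.mul_sum, Finset.sum_mul]
      refine Finset.sum_congr rfl fun k _ => ?_
      rw [hS]
      simp only [Matrix.mul_smul, Matrix.smul_mul]
    rw [this, hsumD]
  -- the product of the two filters
  set e : Fin N → ℝ :=
    fun i => (∑ k : Fin N, θ k * M k i) * (∑ k : Fin N, φ k * M k i) with he
  -- choose ψ solving the triangular system
  refine ⟨Matrix.vecMul e M⁻¹, ?_⟩
  have hψ : (fun i => ∑ k : Fin N, Matrix.vecMul e M⁻¹ k * M k i) = e := by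
    have : Matrix.vecMul (Matrix.vecMul e M⁻¹) M = e := by
      rw [Matrix.vecMul_vecMul, Matrix.nonsing_inv_mul _ hMunit, Matrix.vecMul_one]
    funext i
    have := congrFun this i
    simpa [Matrix.vecMul, dotProduct] using this
  rw [hfilter θ, hfilter φ, hfilter (Matrix.vecMul e M⁻¹), hψ]
  calc W * Matrix.diagonal (fun i => ∑ k : Fin N, θ k * M k i) * W⁻¹ *
        (W * Matrix.diagonal (fun i => ∑ k : Fin N, φ k * M k i) * W⁻¹)
      = W * (Matrix.diagonal (fun i => ∑ k : Fin N, θ k * M k i) *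
          ((W⁻¹ * W) * Matrix.diagonal (fun i => ∑ k : Fin N, φ k * M k i))) * W⁻¹ := by
        simp only [Matrix.mul_assoc]
    _ = W * Matrix.diagonal e * W⁻¹ := by
        rw [hWinv, Matrix.one_mul, Matrix.diagonal_mul_diagonal]
end
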